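/- For any real δ > 0 and integers s, t ≥ 1, the Minkowski sum Q(s, δ) + 2^s · Q(t, δ) of a regular QAM constellation with 4^s points and minimum distance δ and the 2^s-dilate of a regular QAM constellation with 4^t points and minimum distance δ is exactly the regular QAM constellation Q(s + t, δ); in particular this superimposed constellation has zero mean, cardinality 4^s · 4^t, and minimum distance δ. -/

import Mathlib

open Pointwise

noncomputable section

/-- The regular QAM constellation with `4^t` points and minimum distance `δ`. -/
def QAM (t : ℕ) (δ : ℝ) : Set ℂ :=
  { z | ∃ a : ℕ, a < 2 ^ t ∧ ∃ b : ℕ, b < 2 ^ t ∧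
      z = (δ : ℂ) * (((a : ℂ) - ((2 : ℂ) ^ t - 1) / 2) +
        ((b : ℂ) - ((2 : ℂ) ^ t - 1) / 2) * Complex.I) }

/-- The superimposed constellation `Q(s,δ) + 2^s • Q(t,δ)` (Minkowski sum). -/
def superQAM (s t : ℕ) (δ : ℝ) : Set ℂ :=
  QAM s δ + ((2 : ℂ) ^ s) • QAM t δ

namespace QamAux

noncomputable def f (δ : ℝ) (n : ℕ) (p : ℕ × ℕ) : ℂ :=
  ((δ * ((p.1 : ℝ) - ((2:ℝ)^n - 1)/2) : ℝ) : ℂ) +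
    ((δ * ((p.2 : ℝ) - ((2:ℝ)^n - 1)/2) : ℝ) : ℂ) * Complex.I

lemma f_eq (δ : ℝ) (n : ℕ) (a b : ℕ) :
    f δ n (a, b) = (δ : ℂ) * (((a : ℂ) - ((2 : ℂ) ^ n - 1) / 2) +
      ((b : ℂ) - ((2 : ℂ) ^ n - 1) / 2) * Complex.I) := by
  simp only [f]
  push_cast
  ring

lemma qam_eq (δ : ℝ) (n : ℕ) :
    QAM n δ = ↑((Finset.range (2^n) ×ˢ Finset.range (2^n)).image (f δ n)) := by
  ext z
  simp only [QAM, Set.mem_setOf_eq, Finset.coe_image, Set.mem_image, Finset.mem_coe,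
    Finset.mem_product, Finset.mem_range]
  constructor
  · rintro ⟨a, ha, b, hb, rfl⟩
    exact ⟨(a, b), ⟨ha, hb⟩, f_eq δ n a b⟩
  · rintro ⟨⟨a, b⟩, ⟨ha, hb⟩, rfl⟩
    exact ⟨a, ha, b, hb, f_eq δ n a b⟩

lemma f_inj (δ : ℝ) (hδ : δ ≠ 0) (n : ℕ) : Function.Injective (f δ n) := by
  rintro ⟨a, b⟩ ⟨a', b'⟩ h
  simp only [f, Complex.ext_iff, Complex.add_re, Complex.add_im, Complex.ofReal_re,
    Complex.ofReal_im, Complex.mul_re, Complex.mul_im, Complex.I_re, Complex.I_im,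
    mul_zero, mul_one, zero_mul, sub_zero, zero_add, add_zero, zero_sub, neg_zero] at h
  obtain ⟨h1, h2⟩ := h
  have ha : (a:ℝ) = a' := by
    have := mul_left_cancel₀ hδ h1
    linarith
  have hb : (b:ℝ) = b' := by
    have := mul_left_cancel₀ hδ h2
    linarith
  have : a = a' := Nat.cast_injective ha
  have : b = b' := Nat.cast_injective hb
  simp_all

lemma row_sum (δ : ℝ) (n : ℕ) :
    ∑ a ∈ Finset.range (2^n), (δ * ((a:ℝ) - ((2:ℝ)^n - 1)/2)) = 0 := by
  rw [← Finset.mul_sum, Finset.sum_sub_distrib, Finset.sum_const, Finset.card_range]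
  have h1 : (1:ℕ) ≤ 2^n := Nat.one_le_two_pow
  have h2 : (∑ i ∈ Finset.range (2^n), (i:ℝ)) = (2:ℝ)^n * ((2:ℝ)^n - 1) / 2 := by
    have hg := Finset.sum_range_id_mul_two (2^n)
    have hcast := congrArg (Nat.cast : ℕ → ℝ) hg
    push_cast [Nat.cast_sub h1] at hcast
    linarith
  rw [h2]
  simp only [nsmul_eq_mul]
  push_cast
  ring

lemma qam_finsum (δ : ℝ) (hδ : δ ≠ 0) (n : ℕ) : (∑ᶠ x ∈ QAM n δ, x) = 0 := by
  rw [qam_eq, finsum_mem_coe_finset,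
    Finset.sum_image (fun p _ q _ h => f_inj δ hδ n h), Finset.sum_product]
  simp only [f]
  have hz : ((∑ a ∈ Finset.range (2^n), (δ * ((a:ℝ) - ((2:ℝ)^n - 1)/2)) : ℝ) : ℂ) = 0 := by
    rw [row_sum]; simp
  calc ∑ a ∈ Finset.range (2^n), ∑ b ∈ Finset.range (2^n),
        (((δ * ((a : ℝ) - ((2:ℝ)^n - 1)/2) : ℝ) : ℂ) +
          ((δ * ((b : ℝ) - ((2:ℝ)^n - 1)/2) : ℝ) : ℂ) * Complex.I)
      = ∑ a ∈ Finset.range (2^n), ((2^n : ℕ) • ((δ * ((a : ℝ) - ((2:ℝ)^n - 1)/2) : ℝ) : ℂ) +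
          ((∑ b ∈ Finset.range (2^n), (δ * ((b:ℝ) - ((2:ℝ)^n - 1)/2)) : ℝ) : ℂ) * Complex.I) := by
        refine Finset.sum_congr rfl (fun a _ => ?_)
        rw [Finset.sum_add_distrib, Finset.sum_const, Finset.card_range, ← Finset.sum_mul]
        push_cast
        ring
    _ = 0 := by
        rw [hz]
        simp only [zero_mul, add_zero, ← Finset.smul_sum]
        rw [← Complex.ofReal_sum, row_sum]
        simp

lemma qam_ncard (δ : ℝ) (hδ : δ ≠ 0) (n : ℕ) : (QAM n δ).ncard = 2^n * 2^n := by
  rw [qam_eq δ n, Set.ncard_coe_finset,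
    Finset.card_image_of_injective _ (f_inj δ hδ n), Finset.card_product, Finset.card_range]

lemma qam_dist (δ : ℝ) (hδ : 0 < δ) (n : ℕ) :
    ∀ x ∈ QAM n δ, ∀ y ∈ QAM n δ, x ≠ y → δ ≤ ‖x - y‖ := by
  rintro x ⟨a, ha, b, hb, rfl⟩ y ⟨a', ha', b', hb', rfl⟩ hxy
  rw [← f_eq, ← f_eq] at hxy ⊢
  have hd : f δ n (a, b) - f δ n (a', b') =
      ((δ * ((a:ℝ) - a') : ℝ) : ℂ) + ((δ * ((b:ℝ) - b') : ℝ) : ℂ) * Complex.I := by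
    simp only [f]
    push_cast
    ring
  have hsq : (‖f δ n (a,b) - f δ n (a',b')‖)^2 =
      (δ * ((a:ℝ) - a'))^2 + (δ * ((b:ℝ) - b'))^2 := by
    rw [hd, Complex.sq_norm, Complex.normSq_apply]
    simp [Complex.add_re, Complex.add_im, Complex.mul_re, Complex.mul_im]
    ring
  have hab : a ≠ a' ∨ b ≠ b' := by
    by_contra hc
    push_neg at hc
    exact hxy (by rw [hc.1, hc.2])
  have hone : (1:ℝ) ≤ ((a:ℝ) - a')^2 ∨ (1:ℝ) ≤ ((b:ℝ) - b')^2 := by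
    rcases hab with h | h
    · left
      rcases Nat.lt_or_ge a a' with hlt | hge
      · have : (a:ℝ) + 1 ≤ a' := by exact_mod_cast hlt
        nlinarith
      · have hlt : a' < a := lt_of_le_of_ne hge (Ne.symm h)
        have : (a':ℝ) + 1 ≤ a := by exact_mod_cast hlt
        nlinarith
    · right
      rcases Nat.lt_or_ge b b' with hlt | hge
      · have : (b:ℝ) + 1 ≤ b' := by exact_mod_cast hlt
        nlinarith
      · have hlt : b' < b := lt_of_le_of_ne hge (Ne.symm h)
        have : (b':ℝ) + 1 ≤ b := by exact_mod_cast hlt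
        nlinarith
  have hle : δ^2 ≤ (‖f δ n (a,b) - f δ n (a',b')‖)^2 := by
    rw [hsq]
    rcases hone with h | h <;> nlinarith [sq_nonneg (δ * ((a:ℝ) - a')), sq_nonneg (δ * ((b:ℝ) - b'))]
  have := Real.sqrt_le_sqrt hle
  rwa [Real.sqrt_sq hδ.le, Real.sqrt_sq (norm_nonneg _)] at this

lemma super_eq (δ : ℝ) (s t : ℕ) : superQAM s t δ = QAM (s + t) δ := by
  ext z
  constructor
  · rintro hz
    rw [superQAM, Set.mem_add] at hz
    obtain ⟨x, hx, w, hw, rfl⟩ := hz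
    obtain ⟨y, hy, rfl⟩ := hw
    obtain ⟨a1, ha1, b1, hb1, rfl⟩ := hx
    obtain ⟨a2, ha2, b2, hb2, rfl⟩ := hy
    refine ⟨a1 + 2^s * a2, ?_, b1 + 2^s * b2, ?_, ?_⟩
    · have h1 : a1 + 2^s * a2 < 2^s * (a2 + 1) := by
        rw [mul_add, mul_one]; omega
      calc a1 + 2^s * a2 < 2^s * (a2 + 1) := h1
        _ ≤ 2^s * 2^t := Nat.mul_le_mul_left _ ha2
        _ = 2^(s+t) := (pow_add 2 s t).symm
    · have h1 : b1 + 2^s * b2 < 2^s * (b2 + 1) := by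
        rw [mul_add, mul_one]; omega
      calc b1 + 2^s * b2 < 2^s * (b2 + 1) := h1
        _ ≤ 2^s * 2^t := Nat.mul_le_mul_left _ hb2
        _ = 2^(s+t) := (pow_add 2 s t).symm
    · simp only [smul_eq_mul]
      push_cast
      rw [pow_add]
      ring
  · rintro ⟨a, ha, b, hb, rfl⟩
    have hps : 0 < 2^s := Nat.pow_pos (by norm_num)
    have ha2 : a / 2^s < 2^t := by
      rw [Nat.div_lt_iff_lt_mul hps]
      calc a < 2^(s+t) := ha
        _ = 2^t * 2^s := by rw [pow_add]; ring
    have hb2 : b / 2^s < 2^t := by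
      rw [Nat.div_lt_iff_lt_mul hps]
      calc b < 2^(s+t) := hb
        _ = 2^t * 2^s := by rw [pow_add]; ring
    have hx : (δ : ℂ) * ((((a % 2^s : ℕ) : ℂ) - ((2 : ℂ) ^ s - 1) / 2) +
        (((b % 2^s : ℕ) : ℂ) - ((2 : ℂ) ^ s - 1) / 2) * Complex.I) ∈ QAM s δ :=
      ⟨a % 2^s, Nat.mod_lt _ hps, b % 2^s, Nat.mod_lt _ hps, rfl⟩
    have hy : (δ : ℂ) * ((((a / 2^s : ℕ) : ℂ) - ((2 : ℂ) ^ t - 1) / 2) +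
        (((b / 2^s : ℕ) : ℂ) - ((2 : ℂ) ^ t - 1) / 2) * Complex.I) ∈ QAM t δ :=
      ⟨a / 2^s, ha2, b / 2^s, hb2, rfl⟩
    have hmem := Set.add_mem_add hx (Set.smul_mem_smul_set (a := ((2:ℂ)^s)) hy)
    have heq : (δ : ℂ) * ((((a % 2^s : ℕ) : ℂ) - ((2 : ℂ) ^ s - 1) / 2) +
        (((b % 2^s : ℕ) : ℂ) - ((2 : ℂ) ^ s - 1) / 2) * Complex.I) +
        ((2:ℂ)^s) • ((δ : ℂ) * ((((a / 2^s : ℕ) : ℂ) - ((2 : ℂ) ^ t - 1) / 2) +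
        (((b / 2^s : ℕ) : ℂ) - ((2 : ℂ) ^ t - 1) / 2) * Complex.I)) =
        (δ : ℂ) * (((a : ℂ) - ((2 : ℂ) ^ (s+t) - 1) / 2) +
        ((b : ℂ) - ((2 : ℂ) ^ (s+t) - 1) / 2) * Complex.I) := by
      have hA : ((a % 2^s : ℕ) : ℂ) + ((2:ℂ)^s) * ((a / 2^s : ℕ) : ℂ) = (a : ℂ) := by
        exact_mod_cast congrArg (Nat.cast : ℕ → ℂ) (Nat.mod_add_div a (2^s))
      have hB : ((b % 2^s : ℕ) : ℂ) + ((2:ℂ)^s) * ((b / 2^s : ℕ) : ℂ) = (b : ℂ) := by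
        exact_mod_cast congrArg (Nat.cast : ℕ → ℂ) (Nat.mod_add_div b (2^s))
      rw [smul_eq_mul, ← hA, ← hB, pow_add]
      ring
    rw [heq] at hmem
    exact hmem

lemma qam_exists (δ : ℝ) (hδ : 0 < δ) (n : ℕ) (hn : 1 ≤ n) :
    ∃ x ∈ QAM n δ, ∃ y ∈ QAM n δ, x ≠ y ∧ ‖x - y‖ = δ := by
  have hne : δ ≠ 0 := ne_of_gt hδ
  have h1 : 1 < 2^n := by
    have : 2^1 ≤ 2^n := Nat.pow_le_pow_right (by norm_num) hn
    omega
  set x : ℂ := (δ : ℂ) * ((((0:ℕ) : ℂ) - ((2 : ℂ) ^ n - 1) / 2) +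
      (((0:ℕ) : ℂ) - ((2 : ℂ) ^ n - 1) / 2) * Complex.I) with hxdef
  set y : ℂ := (δ : ℂ) * ((((1:ℕ) : ℂ) - ((2 : ℂ) ^ n - 1) / 2) +
      (((0:ℕ) : ℂ) - ((2 : ℂ) ^ n - 1) / 2) * Complex.I) with hydef
  have hd : x - y = -(δ : ℂ) := by
    rw [hxdef, hydef]
    push_cast
    ring
  refine ⟨x, ⟨0, by omega, 0, by omega, rfl⟩, y, ⟨1, h1, 0, by omega, rfl⟩, ?_, ?_⟩
  · intro hcon
    have h0 : x - y = 0 := sub_eq_zero_of_eq hcon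
    rw [hd, neg_eq_zero, Complex.ofReal_eq_zero] at h0
    exact hne h0
  · rw [hd, norm_neg, Complex.norm_real, Real.norm_eq_abs, abs_of_pos hδ]

end QamAux

theorem qam_superposition (δ : ℝ) (hδ : 0 < δ) (s t : ℕ) (hs : 1 ≤ s) (ht : 1 ≤ t) :
    superQAM s t δ = QAM (s + t) δ ∧
    (∑ᶠ x ∈ superQAM s t δ, x) = 0 ∧
    (superQAM s t δ).ncard = 4 ^ s * 4 ^ t ∧
    (∀ x ∈ superQAM s t δ, ∀ y ∈ superQAM s t δ, x ≠ y → δ ≤ ‖x - y‖) ∧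
    (∃ x ∈ superQAM s t δ, ∃ y ∈ superQAM s t δ, x ≠ y ∧ ‖x - y‖ = δ) := by
  have hne : δ ≠ 0 := ne_of_gt hδ
  have hset := QamAux.super_eq δ s t
  refine ⟨hset, ?_, ?_, ?_, ?_⟩
  · rw [hset]; exact QamAux.qam_finsum δ hne (s+t)
  · rw [hset, QamAux.qam_ncard δ hne (s+t)]
    calc (2:ℕ)^(s+t)*2^(s+t) = 2^((s+t)+(s+t)) := (pow_add _ _ _).symm
      _ = 2^(2*(s+t)) := by ring_nf
      _ = (2^2)^(s+t) := pow_mul _ _ _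
      _ = 4^(s+t) := by norm_num
      _ = 4^s*4^t := pow_add _ _ _
  · rw [hset]; exact QamAux.qam_dist δ hδ (s+t)
  · rw [hset]
    exact QamAux.qam_exists δ hδ (s+t) (by omega)
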